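/- Sign of a matching permutation counts crossings: let M = {(a_1,b_1),…,(a_L,b_L)} be a perfect matching of {1,…,2L} with a_i < b_i for each i, and let σ be the permutation of {1,…,2L} defined by σ(2i−1) = a_i and σ(2i) = b_i. Then the sign of σ equals (−1)^{N_c(M)}, where N_c(M) is the number of crossing pairs of M; in particular this sign does not depend on the ordering chosen for the pairs of M. -/

import Mathlib

noncomputable section

/-- The number of crossing pairs of a matching `M`: pairs `(a,b)` and `(c,d)` of `M`
(written with `a < b`, `c < d`) cross if `a < c < b < d` or `c < a < d < b`; each
crossing is counted once (via the ordering `a < c`). -/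
def crossings (M : Finset (ℕ × ℕ)) : ℕ :=
  ((M ×ˢ M).filter fun x => x.1.1 < x.2.1 ∧ x.2.1 < x.1.2 ∧ x.1.2 < x.2.2).card

/-- The (0-based) position `2i - 1` (1-based), i.e. the first slot of the `i`-th pair. -/
def posA (L : ℕ) (i : Fin L) : Fin (2 * L) := ⟨2 * (i : ℕ), by have := i.isLt; omega⟩

/-- The (0-based) position `2i` (1-based), i.e. the second slot of the `i`-th pair. -/
def posB (L : ℕ) (i : Fin L) : Fin (2 * L) := ⟨2 * (i : ℕ) + 1, by have := i.isLt; omega⟩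

section Aux

open Finset
open scoped Classical

lemma my_sign_eq_signAux {n : ℕ} (σ : Equiv.Perm (Fin n)) :
    Equiv.Perm.sign σ = Equiv.Perm.signAux σ := by
  refine Equiv.Perm.swap_induction_on σ ?_ ?_
  · rw [Equiv.Perm.sign_one, Equiv.Perm.signAux_one]
  · intro f x y hxy ih
    rw [map_mul, Equiv.Perm.signAux_mul, Equiv.Perm.sign_swap hxy,
      Equiv.Perm.signAux_swap hxy, ih]

lemma my_sign_eq_pow {n : ℕ} (σ : Equiv.Perm (Fin n)) :
    (Equiv.Perm.sign σ : ℤ) =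
      (-1) ^ (((univ ×ˢ univ : Finset (Fin n × Fin n)).filter
        fun x => x.2 < x.1 ∧ σ x.1 < σ x.2).card) := by
  rw [my_sign_eq_signAux]
  unfold Equiv.Perm.signAux
  rw [Finset.prod_ite, Finset.prod_const, Finset.prod_const, one_pow, mul_one]
  have hcard : ((Equiv.Perm.finPairsLT n).filter fun x => σ x.1 ≤ σ x.2).card
      = ((univ ×ˢ univ : Finset (Fin n × Fin n)).filter
        fun x => x.2 < x.1 ∧ σ x.1 < σ x.2).card := by
    apply Finset.card_nbij (fun x => (x.1, x.2))
    · intro x hx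
      simp only [Finset.mem_coe, Finset.mem_filter, Equiv.Perm.mem_finPairsLT] at hx ⊢
      refine ⟨by simp, hx.1, lt_of_le_of_ne hx.2 ?_⟩
      intro h
      exact absurd (σ.injective h) hx.1.ne'
    · intro x hx y hy hxy
      simp only [Prod.mk.injEq] at hxy
      exact Sigma.ext hxy.1 (heq_of_eq hxy.2)
    · intro y hy
      simp only [Finset.coe_filter, Set.mem_setOf_eq, Set.mem_image] at hy ⊢
      exact ⟨⟨y.1, y.2⟩, ⟨by simp [Equiv.Perm.mem_finPairsLT, hy.2.1], hy.2.2.le⟩, rfl⟩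
  rw [hcard]
  push_cast
  rfl

def pairEquiv (L : ℕ) : Fin L × Bool ≃ Fin (2 * L) where
  toFun p := ⟨2 * (p.1 : ℕ) + (if p.2 then 1 else 0), by
    have := p.1.isLt; cases p.2 <;> simp <;> omega⟩
  invFun r := (⟨(r : ℕ) / 2, by have := r.isLt; omega⟩, decide ((r : ℕ) % 2 = 1))
  left_inv := by
    rintro ⟨⟨i, hi⟩, s⟩
    cases s <;> simp <;> omega
  right_inv := by
    rintro ⟨r, hr⟩
    apply Fin.ext
    by_cases h : r % 2 = 1 <;> simp [h] <;> omega

lemma pairEquiv_false (L : ℕ) (i : Fin L) : pairEquiv L (i, false) = posA L i := by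
  apply Fin.ext; simp [pairEquiv, posA]

lemma pairEquiv_true (L : ℕ) (i : Fin L) : pairEquiv L (i, true) = posB L i := by
  apply Fin.ext; simp [pairEquiv, posB]

lemma four_parity (a b c d : ℕ) (hab : a < b) (hcd : c < d) (h1 : a ≠ c) (h2 : a ≠ d)
    (h3 : b ≠ c) (h4 : b ≠ d) :
    ((if b < d then 1 else 0) + (if b < c then 1 else 0) + ((if a < d then 1 else 0)
      + (if a < c then 1 else 0))) % 2
      = (if (a < c ∧ c < b ∧ b < d) ∨ (c < a ∧ a < d ∧ d < b) then (1:ℕ) else 0) % 2 := by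
  split_ifs <;> omega

variable (L : ℕ) (σ : Equiv.Perm (Fin (2 * L)))

def Ninv (i j : Fin L) : ℕ :=
  ∑ s : Bool, ∑ t : Bool,
    if pairEquiv L (j, t) < pairEquiv L (i, s) ∧
        σ (pairEquiv L (i, s)) < σ (pairEquiv L (j, t)) then 1 else 0

lemma card_S :
    ((univ ×ˢ univ : Finset (Fin (2*L) × Fin (2*L))).filter
        fun x => x.2 < x.1 ∧ σ x.1 < σ x.2).card
      = ∑ i : Fin L, ∑ j : Fin L, Ninv L σ i j := by
  rw [Finset.card_filter, Finset.univ_product_univ]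
  rw [← Equiv.sum_comp ((pairEquiv L).prodCongr (pairEquiv L))
    (fun x : Fin (2*L) × Fin (2*L) => if x.2 < x.1 ∧ σ x.1 < σ x.2 then (1:ℕ) else 0)]
  simp only [Equiv.prodCongr_apply, Prod.map_fst, Prod.map_snd, Fintype.sum_prod_type]
  exact Finset.sum_congr rfl fun i _ => Finset.sum_comm

lemma Ninv_mod_two (hσ : ∀ i : Fin L, σ (posA L i) < σ (posB L i)) (i j : Fin L) :
    Ninv L σ i j % 2 =
      (if j < i ∧
        (((σ (posA L i) : ℕ) < (σ (posA L j) : ℕ) ∧ (σ (posA L j) : ℕ) < (σ (posB L i) : ℕ)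
            ∧ (σ (posB L i) : ℕ) < (σ (posB L j) : ℕ)) ∨
          ((σ (posA L j) : ℕ) < (σ (posA L i) : ℕ) ∧ (σ (posA L i) : ℕ) < (σ (posB L j) : ℕ)
            ∧ (σ (posB L j) : ℕ) < (σ (posB L i) : ℕ)))
        then 1 else 0) % 2 := by
  have hab : (σ (posA L i) : ℕ) < (σ (posB L i) : ℕ) := hσ i
  have hcd : (σ (posA L j) : ℕ) < (σ (posB L j) : ℕ) := hσ j
  simp only [Ninv, Fintype.sum_bool, pairEquiv_true, pairEquiv_false]
  rcases Nat.lt_trichotomy (i : ℕ) (j : ℕ) with h | h | h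
  · have q1 : ¬ (posB L j < posB L i) := by simp only [posB, Fin.mk_lt_mk]; omega
    have q2 : ¬ (posA L j < posB L i) := by simp only [posA, posB, Fin.mk_lt_mk]; omega
    have q3 : ¬ (posB L j < posA L i) := by simp only [posA, posB, Fin.mk_lt_mk]; omega
    have q4 : ¬ (posA L j < posA L i) := by simp only [posA, posB, Fin.mk_lt_mk]; omega
    have q5 : ¬ (j < i) := by simp only [Fin.lt_def]; omega
    simp [q1, q2, q3, q4, q5]
  · have hji : j = i := Fin.ext h.symm
    subst hji
    have q1 : ¬ (posB L j < posB L j) := lt_irrefl _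
    have q2 : ¬ (σ (posB L j) < σ (posA L j)) := not_lt.2 (hσ j).le
    have q3 : ¬ (posB L j < posA L j) := by simp only [posA, posB, Fin.mk_lt_mk]; omega
    have q4 : ¬ (posA L j < posA L j) := lt_irrefl _
    have q5 : ¬ (j < j) := lt_irrefl _
    simp [q1, q2, q3, q4, q5]
  · have p1 : posB L j < posB L i := by simp only [posB, Fin.mk_lt_mk]; omega
    have p2 : posA L j < posB L i := by simp only [posA, posB, Fin.mk_lt_mk]; omega
    have p3 : posB L j < posA L i := by simp only [posA, posB, Fin.mk_lt_mk]; omega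
    have p4 : posA L j < posA L i := by simp only [posA, posB, Fin.mk_lt_mk]; omega
    have hji : j < i := by simp only [Fin.lt_def]; omega
    have hv : ∀ x y : Fin (2 * L), (σ x < σ y) ↔ ((σ x : ℕ) < (σ y : ℕ)) := by
      intro x y; exact Fin.lt_def
    have hAA : (σ (posA L i) : ℕ) ≠ (σ (posA L j) : ℕ) := by
      intro hh
      have h2 := congrArg Fin.val (σ.injective (Fin.val_injective hh))
      simp only [posA] at h2
      omega
    have hBB : (σ (posB L i) : ℕ) ≠ (σ (posB L j) : ℕ) := by
      intro hh
      have h2 := congrArg Fin.val (σ.injective (Fin.val_injective hh))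
      simp only [posB] at h2
      omega
    have hABd : (σ (posA L i) : ℕ) ≠ (σ (posB L j) : ℕ) := by
      intro hh
      have h2 := congrArg Fin.val (σ.injective (Fin.val_injective hh))
      simp only [posA, posB] at h2
      omega
    have hBAd : (σ (posB L i) : ℕ) ≠ (σ (posA L j) : ℕ) := by
      intro hh
      have h2 := congrArg Fin.val (σ.injective (Fin.val_injective hh))
      simp only [posA, posB] at h2
      omega
    simp only [p1, p2, p3, p4, hji, hv, true_and]
    exact four_parity _ _ _ _ hab hcd hAA hABd hBAd hBB

lemma sum_D_eq :
    ∑ i : Fin L, ∑ j : Fin L,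
        (if j < i ∧
          (((σ (posA L i) : ℕ) < (σ (posA L j) : ℕ) ∧ (σ (posA L j) : ℕ) < (σ (posB L i) : ℕ)
              ∧ (σ (posB L i) : ℕ) < (σ (posB L j) : ℕ)) ∨
            ((σ (posA L j) : ℕ) < (σ (posA L i) : ℕ) ∧ (σ (posA L i) : ℕ) < (σ (posB L j) : ℕ)
              ∧ (σ (posB L j) : ℕ) < (σ (posB L i) : ℕ)))
          then (1:ℕ) else 0)
      = ((univ ×ˢ univ : Finset (Fin L × Fin L)).filter fun x =>
          x.2 < x.1 ∧
          (((σ (posA L x.1) : ℕ) < (σ (posA L x.2) : ℕ)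
              ∧ (σ (posA L x.2) : ℕ) < (σ (posB L x.1) : ℕ)
              ∧ (σ (posB L x.1) : ℕ) < (σ (posB L x.2) : ℕ)) ∨
            ((σ (posA L x.2) : ℕ) < (σ (posA L x.1) : ℕ)
              ∧ (σ (posA L x.1) : ℕ) < (σ (posB L x.2) : ℕ)
              ∧ (σ (posB L x.2) : ℕ) < (σ (posB L x.1) : ℕ)))).card := by
  rw [Finset.card_filter, Finset.univ_product_univ, Fintype.sum_prod_type]

lemma card_ordered_eq :
    ((univ ×ˢ univ : Finset (Fin L × Fin L)).filter fun x =>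
          x.2 < x.1 ∧
          (((σ (posA L x.1) : ℕ) < (σ (posA L x.2) : ℕ)
              ∧ (σ (posA L x.2) : ℕ) < (σ (posB L x.1) : ℕ)
              ∧ (σ (posB L x.1) : ℕ) < (σ (posB L x.2) : ℕ)) ∨
            ((σ (posA L x.2) : ℕ) < (σ (posA L x.1) : ℕ)
              ∧ (σ (posA L x.1) : ℕ) < (σ (posB L x.2) : ℕ)
              ∧ (σ (posB L x.2) : ℕ) < (σ (posB L x.1) : ℕ)))).card
      = ((univ ×ˢ univ : Finset (Fin L × Fin L)).filter fun x =>
          (σ (posA L x.1) : ℕ) < (σ (posA L x.2) : ℕ)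
            ∧ (σ (posA L x.2) : ℕ) < (σ (posB L x.1) : ℕ)
            ∧ (σ (posB L x.1) : ℕ) < (σ (posB L x.2) : ℕ)).card := by
  apply Finset.card_nbij'
    (i := fun x => if (σ (posA L x.1) : ℕ) < (σ (posA L x.2) : ℕ) then x else (x.2, x.1))
    (j := fun y => if y.2 < y.1 then y else (y.2, y.1))
  · intro a ha
    simp only [Finset.mem_coe, Finset.mem_filter, Finset.mem_product, Finset.mem_univ, true_and] at ha ⊢
    rcases ha.2 with hc | hc
    · rw [if_pos hc.1]; exact hc
    · rw [if_neg (by omega)]; exact hc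
  · intro a ha
    simp only [Finset.mem_coe, Finset.mem_filter, Finset.mem_product, Finset.mem_univ, true_and] at ha ⊢
    by_cases hy : a.2 < a.1
    · rw [if_pos hy]; exact ⟨hy, Or.inl ha⟩
    · rw [if_neg hy]
      have hne : a.1 ≠ a.2 := by
        intro h; rw [h] at ha; omega
      exact ⟨lt_of_le_of_ne (not_lt.1 hy) hne, Or.inr ha⟩
  · intro a ha
    simp only [Finset.mem_coe, Finset.mem_filter, Finset.mem_product, Finset.mem_univ, true_and] at ha
    dsimp only
    by_cases hA : (σ (posA L a.1) : ℕ) < (σ (posA L a.2) : ℕ)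
    · rw [if_pos hA, if_pos ha.1]
    · rw [if_neg hA, if_neg (not_lt.2 ha.1.le)]
  · intro a ha
    simp only [Finset.mem_coe, Finset.mem_filter, Finset.mem_product, Finset.mem_univ, true_and] at ha
    dsimp only
    by_cases hy : a.2 < a.1
    · rw [if_pos hy, if_pos ha.1]
    · rw [if_neg hy,
        if_neg (show ¬ ((σ (posA L a.2) : ℕ) < (σ (posA L a.1) : ℕ)) from by omega)]

lemma my_crossings_eq :
    crossings ((Finset.univ : Finset (Fin L)).image fun i =>
        (((σ (posA L i)) : ℕ) + 1, ((σ (posB L i)) : ℕ) + 1))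
      = ((univ ×ˢ univ : Finset (Fin L × Fin L)).filter fun x =>
          (σ (posA L x.1) : ℕ) < (σ (posA L x.2) : ℕ)
            ∧ (σ (posA L x.2) : ℕ) < (σ (posB L x.1) : ℕ)
            ∧ (σ (posB L x.1) : ℕ) < (σ (posB L x.2) : ℕ)).card := by
  have hf : Function.Injective (fun i : Fin L =>
      (((σ (posA L i)) : ℕ) + 1, ((σ (posB L i)) : ℕ) + 1)) := by
    intro u v h
    simp only [Prod.mk.injEq, Nat.add_right_cancel_iff] at h
    have h2 := congrArg Fin.val (σ.injective (Fin.val_injective h.1))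
    simp only [posA] at h2
    exact Fin.ext (by omega)
  rw [crossings]
  have himg : (((Finset.univ : Finset (Fin L)).image fun i =>
        (((σ (posA L i)) : ℕ) + 1, ((σ (posB L i)) : ℕ) + 1)) ×ˢ
      ((Finset.univ : Finset (Fin L)).image fun i =>
        (((σ (posA L i)) : ℕ) + 1, ((σ (posB L i)) : ℕ) + 1)))
      = (univ ×ˢ univ : Finset (Fin L × Fin L)).image
          (Prod.map (fun i => (((σ (posA L i)) : ℕ) + 1, ((σ (posB L i)) : ℕ) + 1))
            (fun i => (((σ (posA L i)) : ℕ) + 1, ((σ (posB L i)) : ℕ) + 1))) := by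
    ext ⟨u, v⟩
    simp only [Finset.mem_product, Finset.mem_image, Finset.mem_univ, true_and,
      Prod.ext_iff, Prod.map, Prod.exists]
    constructor
    · rintro ⟨⟨a, ha⟩, ⟨b, hb⟩⟩
      exact ⟨a, b, by simp [← ha, ← hb]⟩
    · rintro ⟨a, b, hab⟩
      exact ⟨⟨a, by simp [hab.1.1, hab.1.2]⟩, ⟨b, by simp [hab.2.1, hab.2.2]⟩⟩
  rw [himg, Finset.filter_image, Finset.card_image_of_injective _ (hf.prodMap hf)]
  congr 1
  apply Finset.filter_congr
  intro x _
  simp only [Prod.map, Nat.add_lt_add_iff_right]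

lemma sum_mod_congr {α : Type*} (s : Finset α) (f g : α → ℕ)
    (h : ∀ x ∈ s, f x % 2 = g x % 2) : (∑ x ∈ s, f x) % 2 = (∑ x ∈ s, g x) % 2 := by
  rw [Finset.sum_nat_mod, Finset.sum_congr rfl h, ← Finset.sum_nat_mod]

end Aux

/-- if `σ` is the permutation of `{1, …, 2L}` listing the pairs
`(a_i, b_i)` (with `a_i < b_i`) of a perfect matching `M` via `σ(2i−1) = a_i`,
`σ(2i) = b_i`, then `sign σ = (−1)^{N_c(M)}`, where `N_c(M)` is the number of
crossing pairs of `M`.  (Here positions and values are encoded 0-based by `Fin (2L)`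
and converted to 1-based natural numbers for the matching.) -/
theorem sign_matching_perm_eq_crossings (L : ℕ) (σ : Equiv.Perm (Fin (2 * L)))
    (hσ : ∀ i : Fin L, σ (posA L i) < σ (posB L i)) :
    (Equiv.Perm.sign σ : ℤ) = (-1) ^ crossings
      ((Finset.univ : Finset (Fin L)).image fun i =>
        (((σ (posA L i)) : ℕ) + 1, ((σ (posB L i)) : ℕ) + 1)) := by
  rw [my_sign_eq_pow]
  have hmod : (((Finset.univ ×ˢ Finset.univ : Finset (Fin (2*L) × Fin (2*L))).filter
        fun x => x.2 < x.1 ∧ σ x.1 < σ x.2).card) % 2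
      = (crossings ((Finset.univ : Finset (Fin L)).image fun i =>
          (((σ (posA L i)) : ℕ) + 1, ((σ (posB L i)) : ℕ) + 1))) % 2 := by
    rw [card_S L σ, my_crossings_eq L σ, ← card_ordered_eq L σ, ← sum_D_eq L σ]
    refine sum_mod_congr _ _ _ fun i _ => ?_
    exact sum_mod_congr _ _ _ fun j _ => Ninv_mod_two L σ hσ i j
  rw [neg_one_pow_eq_pow_mod_two, hmod, ← neg_one_pow_eq_pow_mod_two]

end
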